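/- For any integer n ≥ 0, ∑_{i=0}^{n} C(n,i) · 2^i · (i+5)!/120 ≤ e · 2^n · (n+5)!/120. -/

import Mathlib

lemma aux_choose_fact (n i : ℕ) (h : i ≤ n) :
    n.choose i * (i + 5).factorial * (n - i).factorial ≤ (n + 5).factorial := by
  have h1 := Nat.choose_mul_factorial_mul_factorial h
  calc n.choose i * (i + 5).factorial * (n - i).factorial
      = (i+1)*(i+2)*(i+3)*(i+4)*(i+5) * (n.choose i * i.factorial * (n - i).factorial) := by
        simp [Nat.factorial]; ring
    _ = (i+1)*(i+2)*(i+3)*(i+4)*(i+5) * n.factorial := by rw [h1]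
    _ ≤ (n+1)*(n+2)*(n+3)*(n+4)*(n+5) * n.factorial := by gcongr <;> omega
    _ = (n + 5).factorial := by simp [Nat.factorial]; ring

/-- For any integer `n ≥ 0`, `∑_{i=0}^{n} C(n,i) 2^i (i+5)!/120 ≤ e · 2^n (n+5)!/120`. -/
theorem sum_choose_shifted_factorial_le (n : ℕ) :
    (∑ i ∈ Finset.range (n + 1),
        (n.choose i : ℝ) * 2 ^ i * (Nat.factorial (i + 5) : ℝ) / 120)
      ≤ Real.exp 1 * 2 ^ n * (Nat.factorial (n + 5) : ℝ) / 120 := by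
  have step1 : (∑ i ∈ Finset.range (n + 1),
        (n.choose i : ℝ) * 2 ^ i * (Nat.factorial (i + 5) : ℝ) / 120)
      ≤ ∑ i ∈ Finset.range (n + 1),
        (2 : ℝ) ^ n * (Nat.factorial (n + 5) : ℝ) / 120 *
          ((1/2 : ℝ) ^ (n - i) / (Nat.factorial (n - i) : ℝ)) := by
    apply Finset.sum_le_sum
    intro i hi
    have hin : i ≤ n := by
      simp only [Finset.mem_range] at hi; omega
    have keyR : (n.choose i : ℝ) * (Nat.factorial (i + 5) : ℝ) * (Nat.factorial (n - i) : ℝ)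
        ≤ (Nat.factorial (n + 5) : ℝ) := by
      exact_mod_cast aux_choose_fact n i hin
    have hfpos : (0 : ℝ) < (Nat.factorial (n - i) : ℝ) := by
      exact_mod_cast (n - i).factorial_pos
    have h2 : (2 : ℝ) ^ n * (1/2 : ℝ) ^ (n - i) = 2 ^ i := by
      have : (2:ℝ) ^ i * 2 ^ (n - i) = 2 ^ n := by rw [← pow_add]; congr 1; omega
      field_simp
      rw [← this, mul_assoc, ← mul_pow]; norm_num
    calc (n.choose i : ℝ) * 2 ^ i * (Nat.factorial (i + 5) : ℝ) / 120
        = ((n.choose i : ℝ) * (Nat.factorial (i + 5) : ℝ) * (Nat.factorial (n - i) : ℝ)) *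
            (2 ^ i / (120 * (Nat.factorial (n - i) : ℝ))) := by
          field_simp
      _ ≤ (Nat.factorial (n + 5) : ℝ) * (2 ^ i / (120 * (Nat.factorial (n - i) : ℝ))) := by
          apply mul_le_mul_of_nonneg_right keyR (by positivity)
      _ = (2 : ℝ) ^ n * (Nat.factorial (n + 5) : ℝ) / 120 *
            ((1/2 : ℝ) ^ (n - i) / (Nat.factorial (n - i) : ℝ)) := by
          rw [← h2]; field_simp
  refine step1.trans ?_
  rw [← Finset.mul_sum]
  have hrefl := Finset.sum_range_reflect
    (fun j => (1/2:ℝ) ^ j / (Nat.factorial j : ℝ)) (n + 1)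
  simp only [Nat.add_sub_cancel] at hrefl
  rw [hrefl]
  have hsum : (∑ j ∈ Finset.range (n+1), (1/2:ℝ)^j / (Nat.factorial j : ℝ)) ≤ Real.exp (1/2) := by
    exact Real.sum_le_exp_of_nonneg (by norm_num) (n+1)
  have hexp : Real.exp (1/2) ≤ Real.exp 1 := Real.exp_le_exp.mpr (by norm_num)
  calc (2:ℝ)^n * (Nat.factorial (n+5):ℝ)/120 * ∑ j ∈ Finset.range (n+1), (1/2:ℝ)^j / (Nat.factorial j : ℝ)
      ≤ (2:ℝ)^n * (Nat.factorial (n+5):ℝ)/120 * Real.exp 1 := by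
        apply mul_le_mul_of_nonneg_left (hsum.trans hexp) (by positivity)
    _ = Real.exp 1 * 2^n * (Nat.factorial (n+5):ℝ)/120 := by ring
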